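/- Let T be an r×s Latin rectangle on the symbols {1,…,n} with r, s ≤ n, and for each i ∈ {1,…,n} let N(i) denote the number of times the symbol i occurs in T. Then T can be extended to a Latin square of order n if and only if N(i) ≥ r + s − n for every i ∈ {1,…,n}. -/

import Mathlib

open Finset

lemma exists_le_sum {ι : Type*} [Fintype ι] [DecidableEq ι] (f : ι → ℕ) (d : ℕ)
    (h : d ≤ ∑ i, f i) : ∃ g : ι → ℕ, (∀ i, g i ≤ f i) ∧ ∑ i, g i = d := by
  induction d with
  | zero => exact ⟨fun _ => 0, fun i => Nat.zero_le _, by simp⟩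
  | succ d ih =>
    obtain ⟨g, hg, hsum⟩ := ih (by omega)
    have hex : ∃ i, g i < f i := by
      by_contra hc
      push_neg at hc
      have : ∑ i, f i ≤ ∑ i, g i := Finset.sum_le_sum fun i _ => hc i
      omega
    obtain ⟨i0, hi0⟩ := hex
    refine ⟨Function.update g i0 (g i0 + 1), fun i => ?_, ?_⟩
    · rcases eq_or_ne i i0 with rfl | hne
      · simp; omega
      · simp [Function.update_of_ne hne, hg i]
    · rw [Finset.sum_update_of_mem (Finset.mem_univ i0), Finset.sdiff_singleton_eq_erase]
      have h2 := Finset.sum_erase_add univ g (Finset.mem_univ i0)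
      omega

lemma exists_matrix_sums {ι : Type*} [Fintype ι] [DecidableEq ι] (d : ℕ) :
    ∀ (D : ℕ) (c : ι → ℕ), (∑ i, c i = D * d) →
    ∃ m : Fin D → ι → ℕ, (∀ b, ∑ i, m b i = d) ∧ (∀ i, ∑ b, m b i = c i) := by
  intro D
  induction D with
  | zero =>
    intro c hc
    refine ⟨fun b => b.elim0, fun b => b.elim0, fun i => ?_⟩
    have h1 : c i ≤ ∑ j, c j := Finset.single_le_sum (fun j _ => Nat.zero_le _) (Finset.mem_univ i)
    rw [Nat.zero_mul] at hc
    simp only [Finset.univ_eq_empty, Finset.sum_empty]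
    omega
  | succ D ih =>
    intro c hc
    obtain ⟨g, hg, hgsum⟩ := exists_le_sum c d (by
      rw [hc]
      calc d = 1 * d := (one_mul d).symm
      _ ≤ (D + 1) * d := Nat.mul_le_mul_right d (by omega))
    obtain ⟨m, hrow, hcolm⟩ := ih (fun i => c i - g i) (by
      have h1 : ∑ i, (c i - g i + g i) = ∑ i, c i :=
        Finset.sum_congr rfl fun i _ => by have := hg i; omega
      rw [Finset.sum_add_distrib] at h1
      have h3 : (D + 1) * d = D * d + d := by ring
      show ∑ i, (c i - g i) = D * d
      omega)
    refine ⟨Fin.cons g m, fun b => ?_, fun i => ?_⟩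
    · induction b using Fin.cases with
      | zero => simpa using hgsum
      | succ b => simpa using hrow b
    · rw [Fin.sum_univ_succ]
      simp only [Fin.cons_zero, Fin.cons_succ]
      rw [hcolm i]
      have := hg i
      omega

open Finset

lemma hall_of_weights {ι α : Type*} [Fintype ι] [Fintype α] [DecidableEq α]
    (t : ι → Finset α) (w : ι → α → ℕ) (d : ℕ) (hd : 0 < d)
    (hrow : ∀ a, ∑ i, w a i = d) (hcol : ∀ i, ∑ a, w a i ≤ d)
    (hsupp : ∀ a i, w a i ≠ 0 → i ∈ t a) :
    ∃ f : ι → α, Function.Injective f ∧ ∀ a, f a ∈ t a := by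
  rw [← Finset.all_card_le_biUnion_card_iff_existsInjective']
  intro S
  have key : S.card * d ≤ (S.biUnion t).card * d := by
    calc S.card * d = ∑ a ∈ S, ∑ i, w a i := by
          rw [Finset.sum_congr rfl (fun a _ => hrow a), Finset.sum_const, smul_eq_mul]
      _ = ∑ a ∈ S, ∑ i ∈ S.biUnion t, w a i := by
          refine Finset.sum_congr rfl fun a ha => ?_
          refine (Finset.sum_subset (Finset.subset_univ _) ?_).symm
          intro i _ hi
          by_contra hw
          exact hi (Finset.mem_biUnion.mpr ⟨a, ha, hsupp a i hw⟩)
      _ = ∑ i ∈ S.biUnion t, ∑ a ∈ S, w a i := Finset.sum_comm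
      _ ≤ ∑ i ∈ S.biUnion t, d := Finset.sum_le_sum fun i _ =>
          le_trans (Finset.sum_le_sum_of_subset (Finset.subset_univ S)) (hcol i)
      _ = (S.biUnion t).card * d := by rw [Finset.sum_const, smul_eq_mul]
  exact Nat.le_of_mul_le_mul_right key hd

open Finset

lemma occ_card {r s n : ℕ} (T : Fin r → Fin s → Fin n)
    (hrowT : ∀ a, Function.Injective (T a)) (v : Fin n) :
    (univ.filter (fun p : Fin r × Fin s => T p.1 p.2 = v)).card
      = (univ.filter (fun a : Fin r => ∃ j, T a j = v)).card := by
  apply Finset.card_bij (fun p _ => p.1)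
  · intro p hp
    simp only [Finset.mem_filter, Finset.mem_univ, true_and] at hp ⊢
    exact ⟨p.2, hp⟩
  · intro p hp q hq h
    simp only [Finset.mem_filter, Finset.mem_univ, true_and] at hp hq
    have h2 : p.2 = q.2 := hrowT p.1 (by rw [hp, h, hq])
    exact Prod.ext h h2
  · intro a ha
    simp only [Finset.mem_filter, Finset.mem_univ, true_and] at ha
    obtain ⟨j, hj⟩ := ha
    exact ⟨(a, j), by simp [hj], rfl⟩

lemma extend_one_col {r s n : ℕ} (hr : r ≤ n) (hsn : s < n)
    (T : Fin r → Fin s → Fin n)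
    (hrowT : ∀ a, Function.Injective (T a))
    (hN : ∀ v : Fin n, r + s ≤ n + (univ.filter (fun p : Fin r × Fin s => T p.1 p.2 = v)).card) :
    ∃ c : Fin r → Fin n, Function.Injective c ∧ (∀ a j, T a j ≠ c a) ∧
      ∀ v : Fin n, n + (univ.filter (fun p : Fin r × Fin s => T p.1 p.2 = v)).card = r + s →
        ∃ a, c a = v := by
  classical
  set N : Fin n → ℕ := fun v => (univ.filter (fun p : Fin r × Fin s => T p.1 p.2 = v)).card
    with hNdef
  have hoccrow : ∀ v, N v = (univ.filter (fun a : Fin r => ∃ j, T a j = v)).card :=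
    fun v => occ_card T hrowT v
  have hNle : ∀ v, N v ≤ r := fun v => by
    rw [hoccrow]
    exact le_trans (Finset.card_filter_le _ _) (by simp)
  have hmissrow_card : ∀ a : Fin r,
      (univ.filter (fun v : Fin n => ∀ j, T a j ≠ v)).card = n - s := by
    intro a
    have he : univ.filter (fun v : Fin n => ∀ j, T a j ≠ v)
        = univ \ Finset.image (T a) univ := by
      ext v
      simp [eq_comm]
    rw [he, Finset.card_sdiff_of_subset (Finset.subset_univ _),
        Finset.card_image_of_injective _ (hrowT a)]
    simp
  have hmisscol_card : ∀ v : Fin n,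
      (univ.filter (fun a : Fin r => ∀ j, T a j ≠ v)).card = r - N v := by
    intro v
    have he : univ.filter (fun a : Fin r => ∀ j, T a j ≠ v)
        = univ \ univ.filter (fun a : Fin r => ∃ j, T a j = v) := by
      ext a
      simp [not_exists]
    rw [he, Finset.card_sdiff_of_subset (Finset.filter_subset _ _), ← hoccrow]
    simp
  have htotal : ∑ v, N v = r * s := by
    have h1 : ((univ : Finset (Fin r × Fin s))).card = ∑ v, N v :=
      Finset.card_eq_sum_card_fiberwise (fun x _ => Finset.mem_univ (T x.1 x.2))
    rw [Finset.card_univ, Fintype.card_prod, Fintype.card_fin, Fintype.card_fin] at h1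
    exact h1.symm
  set defct : Fin n → ℕ := fun v => N v + n - (r + s) with hdef
  have hrfl : ∀ v : Fin n, N v = (univ.filter (fun p : Fin r × Fin s => T p.1 p.2 = v)).card :=
    fun _ => rfl
  have hdefct_sum : ∑ v, defct v = (n - r) * (n - s) := by
    have h1 : ∑ v, defct v + n * (r + s) = r * s + n * n := by
      calc ∑ v, defct v + n * (r + s)
          = ∑ v, (defct v + (r + s)) := by
            rw [Finset.sum_add_distrib, Finset.sum_const, Finset.card_univ,
              Fintype.card_fin, smul_eq_mul]
        _ = ∑ v, (N v + n) := Finset.sum_congr rfl fun v _ => by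
            have := hN v; have := hrfl v; simp only [hdef]; omega
        _ = r * s + n * n := by
            rw [Finset.sum_add_distrib, Finset.sum_const, Finset.card_univ,
              Fintype.card_fin, smul_eq_mul, htotal]
    zify [hr, hsn.le] at h1 ⊢
    linear_combination h1
  obtain ⟨m, hmrow, hmcol⟩ := exists_matrix_sums (n - s) (n - r) defct (by rw [hdefct_sum])
  set t : Fin r ⊕ Fin (n - r) → Finset (Fin n) :=
    Sum.elim (fun a => univ.filter fun v => ∀ j, T a j ≠ v)
             (fun b => univ.filter fun v => m b v ≠ 0) with ht
  set w : Fin r ⊕ Fin (n - r) → Fin n → ℕ :=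
    Sum.elim (fun a v => if ∀ j, T a j ≠ v then 1 else 0) (fun b v => m b v) with hw
  obtain ⟨f, hfinj, hfmem⟩ := hall_of_weights t w (n - s) (by omega)
    (by
      rintro (a | b)
      · simpa [hw, Finset.sum_boole] using hmissrow_card a
      · simpa [hw] using hmrow b)
    (by
      intro v
      rw [Fintype.sum_sum_type]
      have h1 : ∑ a : Fin r, w (Sum.inl a) v = r - N v := by
        simpa [hw, Finset.sum_boole] using hmisscol_card v
      have h2 : ∑ b : Fin (n - r), w (Sum.inr b) v = defct v := by
        simpa [hw] using hmcol v
      rw [h1, h2]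
      have := hN v
      have := hNle v
      have := hrfl v
      simp only [hdef]
      omega)
    (by
      rintro (a | b) v hv
      · simp only [hw, Sum.elim_inl] at hv
        simp only [ht, Sum.elim_inl, Finset.mem_filter, Finset.mem_univ, true_and]
        by_contra hc
        simp [hc] at hv
      · simp only [hw, Sum.elim_inr] at hv
        simp [ht, hv])
  have hsurj : Function.Surjective f := by
    have hb : Function.Bijective f := (Fintype.bijective_iff_injective_and_card f).mpr
      ⟨hfinj, by simp; omega⟩
    exact hb.2
  refine ⟨fun a => f (Sum.inl a), fun a a' h => Sum.inl.inj (hfinj h), ?_, ?_⟩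
  · intro a j
    have := hfmem (Sum.inl a)
    simp only [ht, Sum.elim_inl, Finset.mem_filter, Finset.mem_univ, true_and] at this
    exact this j
  · intro v hv
    obtain ⟨x, hx⟩ := hsurj v
    rcases x with a | b
    · exact ⟨a, hx⟩
    · exfalso
      have hm : m b v ≠ 0 := by
        have := hfmem (Sum.inr b)
        rw [hx] at this
        simpa [ht] using this
      have hd0 : defct v = 0 := by have := hrfl v; simp only [hdef]; omega
      have : m b v ≤ ∑ b', m b' v :=
        Finset.single_le_sum (f := fun b' => m b' v) (fun b' _ => Nat.zero_le _)
          (Finset.mem_univ b)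
      rw [hmcol v, hd0] at this
      omega

open Finset

lemma extend_one_row {k n : ℕ} (hk : k < n) (M : Fin k → Fin n → Fin n)
    (hrowM : ∀ a, Function.Injective (M a))
    (hcolM : ∀ j : Fin n, Function.Injective fun a => M a j) :
    ∃ f : Fin n → Fin n, Function.Injective f ∧ ∀ a j, M a j ≠ f j := by
  classical
  obtain ⟨f, hfinj, hfmem⟩ := hall_of_weights
    (fun j : Fin n => univ.filter fun v => ∀ a, M a j ≠ v)
    (fun j v => if ∀ a, M a j ≠ v then 1 else 0) (n - k) (by omega)
    (by
      intro j
      have he : univ.filter (fun v : Fin n => ∀ a, M a j ≠ v)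
          = univ \ Finset.image (fun a => M a j) univ := by
        ext v
        simp [eq_comm]
      have : (univ.filter (fun v : Fin n => ∀ a, M a j ≠ v)).card = n - k := by
        rw [he, Finset.card_sdiff_of_subset (Finset.subset_univ _),
          Finset.card_image_of_injective _ (hcolM j)]
        simp
      simpa [Finset.sum_boole] using this)
    (by
      intro v
      have hpos : ∀ a : Fin k, ∃ j, M a j = v := fun a =>
        (Finite.injective_iff_surjective.mp (hrowM a)) v
      choose g hg using hpos
      have hginj : Function.Injective g := by
        intro a a' h
        apply hcolM (g a)
        show M a (g a) = M a' (g a)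
        rw [hg a, h]
        exact (hg a').symm
      have hsub : k ≤ (univ.filter (fun j : Fin n => ∃ a, M a j = v)).card := by
        calc k = (univ : Finset (Fin k)).card := by simp
          _ ≤ _ := Finset.card_le_card_of_injOn g
              (fun a _ => by
                simp only [Finset.mem_coe, Finset.mem_filter, Finset.mem_univ, true_and]
                exact ⟨a, hg a⟩)
              hginj.injOn
      have he : univ.filter (fun j : Fin n => ∀ a, M a j ≠ v)
          = univ \ univ.filter (fun j : Fin n => ∃ a, M a j = v) := by
        ext j
        simp [not_exists]
      have hcard : (univ.filter (fun j : Fin n => ∀ a, M a j ≠ v)).card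
          = n - (univ.filter (fun j : Fin n => ∃ a, M a j = v)).card := by
        rw [he, Finset.card_sdiff_of_subset (Finset.filter_subset _ _)]
        simp
      have : (univ.filter (fun j : Fin n => ∀ a, M a j ≠ v)).card ≤ n - k := by omega
      simpa [Finset.sum_boole] using this)
    (by
      intro j v hv
      simp only [Finset.mem_filter, Finset.mem_univ, true_and]
      by_contra hc
      simp [hc] at hv)
  refine ⟨f, hfinj, fun a j => ?_⟩
  have := hfmem j
  simp only [Finset.mem_filter, Finset.mem_univ, true_and] at this
  exact this a

lemma extend_rows {n : ℕ} :
    ∀ (m k : ℕ), k + m = n → ∀ M : Fin k → Fin n → Fin n,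
      (∀ a, Function.Injective (M a)) → (∀ j : Fin n, Function.Injective fun a => M a j) →
      ∃ L : Fin n → Fin n → Fin n,
        (∀ i, Function.Injective (L i)) ∧ (∀ j : Fin n, Function.Injective fun i => L i j) ∧
        ∀ (i : Fin n) (hi : i.val < k) (j : Fin n), L i j = M ⟨i.val, hi⟩ j := by
  intro m
  induction m with
  | zero =>
    intro k hk M hrowM hcolM
    refine ⟨fun i j => M ⟨i.val, by omega⟩ j, fun i => hrowM _, ?_, fun i hi j => rfl⟩
    intro j i i' h
    have h1 := hcolM j h
    have h2 : i.val = i'.val := by simpa using h1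
    exact Fin.ext h2
  | succ m ih =>
    intro k hk M hrowM hcolM
    obtain ⟨f, hfinj, hfav⟩ := extend_one_row (by omega) M hrowM hcolM
    set M1 : Fin (k + 1) → Fin n → Fin n := Fin.snoc M f with hM1
    have hrow1 : ∀ a, Function.Injective (M1 a) := by
      intro a
      induction a using Fin.lastCases with
      | last => simpa [hM1] using hfinj
      | cast a => simpa [hM1] using hrowM a
    have hcol1 : ∀ j : Fin n, Function.Injective fun a => M1 a j := by
      intro j a a'
      induction a using Fin.lastCases with
      | last =>
        induction a' using Fin.lastCases with
        | last => intro _; rfl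
        | cast a' =>
          intro h
          simp only [hM1, Fin.snoc_last, Fin.snoc_castSucc] at h
          exact absurd h.symm (hfav a' j)
      | cast a =>
        induction a' using Fin.lastCases with
        | last =>
          intro h
          simp only [hM1, Fin.snoc_last, Fin.snoc_castSucc] at h
          exact absurd h (hfav a j)
        | cast a' =>
          intro h
          simp only [hM1, Fin.snoc_castSucc] at h
          rw [hcolM j h]
    obtain ⟨L, h1, h2, h3⟩ := ih (k + 1) (by omega) M1 hrow1 hcol1
    refine ⟨L, h1, h2, ?_⟩
    intro i hi j
    rw [h3 i (by omega) j]
    have he : (⟨i.val, by omega⟩ : Fin (k + 1)) = Fin.castSucc ⟨i.val, hi⟩ := rfl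
    rw [hM1, he, Fin.snoc_castSucc]

open Finset

lemma extend_cols {r n : ℕ} (hr : r ≤ n) :
    ∀ (m s : ℕ), s + m = n → ∀ T : Fin r → Fin s → Fin n,
      (∀ a, Function.Injective (T a)) →
      (∀ j : Fin s, Function.Injective fun a => T a j) →
      (∀ v : Fin n, r + s ≤ n + (univ.filter (fun p : Fin r × Fin s => T p.1 p.2 = v)).card) →
      ∃ T' : Fin r → Fin n → Fin n,
        (∀ a, Function.Injective (T' a)) ∧
        (∀ j : Fin n, Function.Injective fun a => T' a j) ∧
        ∀ (a : Fin r) (j : Fin n) (hj : j.val < s), T' a j = T a ⟨j.val, hj⟩ := by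
  intro m
  induction m with
  | zero =>
    intro s hs T hrowT hcolT _
    refine ⟨fun a j => T a ⟨j.val, by omega⟩, ?_, ?_, fun a j hj => rfl⟩
    · intro a x y h
      have h1 := hrowT a h
      have h2 : x.val = y.val := by simpa using h1
      exact Fin.ext h2
    · intro j a a' h
      exact hcolT ⟨j.val, by omega⟩ h
  | succ m ih =>
    intro s hs T hrowT hcolT hN
    have hsn : s < n := by omega
    obtain ⟨c, hcinj, hcavoid, hccrit⟩ := extend_one_col hr hsn T hrowT hN
    set T1 : Fin r → Fin (s + 1) → Fin n := fun a => Fin.snoc (T a) (c a) with hT1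
    have hrow1 : ∀ a, Function.Injective (T1 a) := by
      intro a x y
      induction x using Fin.lastCases with
      | last =>
        induction y using Fin.lastCases with
        | last => intro _; rfl
        | cast y =>
          intro h
          simp only [hT1, Fin.snoc_last, Fin.snoc_castSucc] at h
          exact absurd h.symm (hcavoid a y)
      | cast x =>
        induction y using Fin.lastCases with
        | last =>
          intro h
          simp only [hT1, Fin.snoc_last, Fin.snoc_castSucc] at h
          exact absurd h (hcavoid a x)
        | cast y =>
          intro h
          simp only [hT1, Fin.snoc_castSucc] at h
          rw [hrowT a h]
    have hcol1 : ∀ j : Fin (s + 1), Function.Injective fun a => T1 a j := by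
      intro j
      induction j using Fin.lastCases with
      | last =>
        intro a a' h
        simp only [hT1, Fin.snoc_last] at h
        exact hcinj h
      | cast j =>
        intro a a' h
        simp only [hT1, Fin.snoc_castSucc] at h
        exact hcolT j h
    have hcount : ∀ v : Fin n,
        (univ.filter (fun p : Fin r × Fin (s + 1) => T1 p.1 p.2 = v)).card
          = (univ.filter (fun p : Fin r × Fin s => T p.1 p.2 = v)).card
            + (univ.filter (fun a : Fin r => c a = v)).card := by
      intro v
      rw [Finset.card_filter, Finset.card_filter, Finset.card_filter,
        Fintype.sum_prod_type, Fintype.sum_prod_type, ← Finset.sum_add_distrib]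
      refine Finset.sum_congr rfl fun a _ => ?_
      rw [Fin.sum_univ_castSucc]
      simp only [hT1, Fin.snoc_castSucc, Fin.snoc_last]
    have hN1 : ∀ v : Fin n, r + (s + 1) ≤
        n + (univ.filter (fun p : Fin r × Fin (s + 1) => T1 p.1 p.2 = v)).card := by
      intro v
      rw [hcount v]
      rcases Nat.lt_or_ge (n + (univ.filter (fun p : Fin r × Fin s => T p.1 p.2 = v)).card)
        (r + s + 1) with hlt | hge
      · have heq : n + (univ.filter (fun p : Fin r × Fin s => T p.1 p.2 = v)).card = r + s := by
          have := hN v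
          omega
        obtain ⟨a, ha⟩ := hccrit v heq
        have hpos : 0 < (univ.filter (fun a : Fin r => c a = v)).card :=
          Finset.card_pos.mpr ⟨a, by simp [ha]⟩
        omega
      · omega
    obtain ⟨T', h1, h2, h3⟩ := ih (s + 1) (by omega) T1 hrow1 hcol1 hN1
    refine ⟨T', h1, h2, ?_⟩
    intro a j hj
    rw [h3 a j (by omega)]
    have he : (⟨j.val, by omega⟩ : Fin (s + 1)) = Fin.castSucc ⟨j.val, hj⟩ := rfl
    rw [hT1]
    simp only []
    rw [show (⟨j.val, by omega⟩ : Fin (s + 1)) = Fin.castSucc ⟨j.val, hj⟩ from rfl,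
      Fin.snoc_castSucc]

open Finset




/-- Ryser's theorem: Let T be an r×s Latin rectangle on the symbols
{1,…,n} with r, s ≤ n (no symbol repeated in any row or column), and let N(i) be the
number of occurrences of symbol i in T.  Then T extends to a Latin square of order n
(occupying the top-left r×s corner) iff N(i) ≥ r + s − n for every symbol i. -/
theorem ryser_theorem
    (r s n : ℕ) (hr : r ≤ n) (hs : s ≤ n)
    (T : Fin r → Fin s → Fin n)
    (hrow : ∀ i : Fin r, Function.Injective (T i))
    (hcol : ∀ j : Fin s, Function.Injective (fun i : Fin r => T i j)) :
    (∃ L : Fin n → Fin n → Fin n,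
      (∀ i : Fin n, Function.Injective (L i)) ∧
      (∀ j : Fin n, Function.Injective (fun i : Fin n => L i j)) ∧
      (∀ (i : Fin r) (j : Fin s), L (Fin.castLE hr i) (Fin.castLE hs j) = T i j)) ↔
    (∀ v : Fin n,
      (r : ℤ) + (s : ℤ) - (n : ℤ) ≤
        ((Finset.univ.filter (fun p : Fin r × Fin s => T p.1 p.2 = v)).card : ℤ)) := by
  classical
  constructor
  · rintro ⟨L, hLr, hLc, hext⟩ v
    have hLsurj : ∀ i : Fin n, Function.Surjective (L i) :=
      fun i => Finite.injective_iff_surjective.mp (hLr i)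
    have hpos : ∀ i : Fin r, ∃ jj : Fin n, L (Fin.castLE hr i) jj = v :=
      fun i => hLsurj _ v
    choose cc hcc using hpos
    have hccinj : Function.Injective cc := by
      intro i i' hcceq
      have h1 : L (Fin.castLE hr i) (cc i) = L (Fin.castLE hr i') (cc i) := by
        rw [hcc i, hcceq]
        exact (hcc i').symm
      have h2 := hLc (cc i) h1
      simpa using h2
    set φ : Fin r → (Fin r × Fin s) ⊕ Fin (n - s) := fun i =>
      if h : (cc i).val < s then Sum.inl (i, ⟨(cc i).val, h⟩)
      else Sum.inr ⟨(cc i).val - s, by omega⟩ with hφ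
    have hle : (univ : Finset (Fin r)).card ≤
        ((univ.filter (fun p : Fin r × Fin s => T p.1 p.2 = v)).disjSum
          (univ : Finset (Fin (n - s)))).card := by
      apply Finset.card_le_card_of_injOn φ
      · intro i _
        by_cases h1 : (cc i).val < s
        · simp only [hφ, dif_pos h1]
          apply Finset.inl_mem_disjSum.mpr
          simp only [Finset.mem_filter, Finset.mem_univ, true_and]
          have he : Fin.castLE hs (⟨(cc i).val, h1⟩ : Fin s) = cc i := Fin.ext rfl
          rw [← hext i ⟨(cc i).val, h1⟩, he]
          exact hcc i
        · simp only [hφ, dif_neg h1]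
          exact Finset.inr_mem_disjSum.mpr (Finset.mem_univ _)
      · intro i _ i' _ heq
        simp only [hφ] at heq
        by_cases h1 : (cc i).val < s <;> by_cases h2 : (cc i').val < s
        · rw [dif_pos h1, dif_pos h2] at heq
          exact (Prod.ext_iff.mp (Sum.inl.inj heq)).1
        · rw [dif_pos h1, dif_neg h2] at heq
          exact absurd heq (by simp)
        · rw [dif_neg h1, dif_pos h2] at heq
          exact absurd heq (by simp)
        · rw [dif_neg h1, dif_neg h2] at heq
          have h3 := Sum.inr.inj heq
          have h3v : (cc i).val - s = (cc i').val - s := by simpa using h3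
          have hlt := (cc i).isLt
          have hlt' := (cc i').isLt
          have h4 : cc i = cc i' := Fin.ext (by omega)
          exact hccinj h4
    rw [Finset.card_disjSum] at hle
    simp only [Finset.card_univ, Fintype.card_fin] at hle
    omega
  · intro h
    have hNnat : ∀ v : Fin n,
        r + s ≤ n + (univ.filter (fun p : Fin r × Fin s => T p.1 p.2 = v)).card := by
      intro v
      have := h v
      omega
    obtain ⟨T', hT'row, hT'col, hT'ext⟩ :=
      extend_cols hr (n - s) s (by omega) T hrow hcol hNnat
    obtain ⟨L, hLrow, hLcol, hLext⟩ :=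
      extend_rows (n - r) r (by omega) T' hT'row hT'col
    refine ⟨L, hLrow, hLcol, ?_⟩
    intro i j
    have hi : (Fin.castLE hr i).val < r := by simpa using i.isLt
    have hj : (Fin.castLE hs j).val < s := by simpa using j.isLt
    rw [hLext (Fin.castLE hr i) hi (Fin.castLE hs j)]
    have e1 : (⟨(Fin.castLE hr i).val, hi⟩ : Fin r) = i := Fin.ext rfl
    rw [e1, hT'ext i (Fin.castLE hs j) hj]
    congr 1
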